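/- arXiv:1512.05923 — 6 statements merged into one kernel-verified Lean document; each statement's English description precedes it below -/
import Mathlib

section
/- Let Λ be a set, Y a complex Hilbert space, Z a complex vector space, K : Λ → (Y →ₗ Z) a map into linear maps from Y to Z, and let S_K ⊆ Z denote the linear span of {K(α)ξ : α ∈ Λ, ξ ∈ Y}. Let L_α : S_K → Y, α ∈ Λ, be linear maps. Then the following are equivalent: (a) for every n ∈ ℕ, all α_1,…,α_n ∈ Λ and ξ_1,…,ξ_n ∈ Y, the double sum ∑_{j=1}^n ∑_{k=1}^n ⟨L_{α_k}(K(α_j)ξ_j), ξ_k⟩_Y is a nonnegative real number; (b) there exist a complex Hilbert space W and a map Φ : Λ → B(Y, W) such that L_β(K(α)ξ) = (Φ(β))†(Φ(α)ξ) for all α, β ∈ Λ and ξ ∈ Y. -/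
open scoped InnerProductSpace ComplexOrder

universe u v w

set_option linter.unusedSectionVars false
set_option maxHeartbeats 1000000

noncomputable section Statement4Aux

variable {Λ : Type u} {Y : Type v} {Z : Type w}
    [NormedAddCommGroup Y] [InnerProductSpace ℂ Y] [CompleteSpace Y]
    [AddCommGroup Z] [Module ℂ Z]
    (K : Λ → Y →ₗ[ℂ] Z)
    (L : Λ → ↥(Submodule.span ℂ {z : Z | ∃ (α : Λ) (ξ : Y), z = K α ξ}) →ₗ[ℂ] Y)

/-- `K α` corestricted to the span `S_K`. -/
def stmt4kk (α : Λ) : Y →ₗ[ℂ] ↥(Submodule.span ℂ {z : Z | ∃ (α : Λ) (ξ : Y), z = K α ξ}) :=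
  (K α).codRestrict _ fun ξ => Submodule.subset_span ⟨α, ξ, rfl⟩

def stmt4T : (Λ →₀ Y) →ₗ[ℂ] ↥(Submodule.span ℂ {z : Z | ∃ (α : Λ) (ξ : Y), z = K α ξ}) :=
  Finsupp.lsum ℂ (stmt4kk K)

def stmt4e (s : ↥(Submodule.span ℂ {z : Z | ∃ (α : Λ) (ξ : Y), z = K α ξ})) :
    (Λ →₀ Y) →ₗ[ℂ] ℂ :=
  Finsupp.lsum ℂ fun β => ((innerSL ℂ (L β s)).toLinearMap)

/-- The pre-inner product on the free space. -/
def stmt4inner (f g : ULift.{w} (Λ →₀ Y)) : ℂ :=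
  stmt4e K L (stmt4T K f.down) g.down

lemma stmt4e_apply (s) (g : Λ →₀ Y) :
    stmt4e K L s g = ∑ β ∈ g.support, ⟪L β s, g β⟫_ℂ := by
  simp [stmt4e, Finsupp.lsum_apply, Finsupp.sum]

lemma stmt4e_add (s t) (g : Λ →₀ Y) :
    stmt4e K L (s + t) g = stmt4e K L s g + stmt4e K L t g := by
  simp [stmt4e_apply, map_add, inner_add_left, Finset.sum_add_distrib]

lemma stmt4e_smul (c : ℂ) (s) (g : Λ →₀ Y) :
    stmt4e K L (c • s) g = starRingEnd ℂ c * stmt4e K L s g := by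
  simp [stmt4e_apply, map_smul, inner_smul_left, Finset.mul_sum, mul_comm]

lemma stmt4inner_expand (f g : ULift.{w} (Λ →₀ Y)) :
    stmt4inner K L f g =
      ∑ β ∈ g.down.support, ∑ α ∈ f.down.support,
        ⟪L β (stmt4kk K α (f.down α)), g.down β⟫_ℂ := by
  rw [stmt4inner, stmt4e_apply]
  refine Finset.sum_congr rfl fun β _ => ?_
  rw [stmt4T, Finsupp.lsum_apply, Finsupp.sum, map_sum, sum_inner]

lemma stmt4inner_single (α β : Λ) (ξ η : Y) :
    stmt4inner K L ⟨Finsupp.single α ξ⟩ ⟨Finsupp.single β η⟩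
      = ⟪L β (stmt4kk K α ξ), η⟫_ℂ := by
  rw [stmt4inner, stmt4T]
  simp [stmt4e, Finsupp.lsum_single]

section Positivity

variable (hp : ∀ (n : ℕ) (α : Fin n → Λ) (ξ : Fin n → Y),
        0 ≤ ∑ j, ∑ k,
          ⟪L (α k) ⟨K (α j) (ξ j), Submodule.subset_span ⟨α j, ξ j, rfl⟩⟩, ξ k⟫_ℂ)

include hp

lemma stmt4pos_finset (s : Finset Λ) (ξ : Λ → Y) :
    0 ≤ ∑ j ∈ s, ∑ k ∈ s, ⟪L k (stmt4kk K j (ξ j)), ξ k⟫_ℂ := by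
  classical
  have key := hp s.card (fun i => ↑(s.equivFin.symm i)) (fun i => ξ ↑(s.equivFin.symm i))
  have e1 : ∀ j : Λ, (∑ k : {x // x ∈ s}, ⟪L ↑k (stmt4kk K j (ξ j)), ξ ↑k⟫_ℂ)
      = ∑ k ∈ s, ⟪L k (stmt4kk K j (ξ j)), ξ k⟫_ℂ :=
    fun j => s.sum_coe_sort (fun k => ⟪L k (stmt4kk K j (ξ j)), ξ k⟫_ℂ)
  calc (0:ℂ) ≤ ∑ j, ∑ k, ⟪L ↑(s.equivFin.symm k)
        (stmt4kk K ↑(s.equivFin.symm j) (ξ ↑(s.equivFin.symm j))), ξ ↑(s.equivFin.symm k)⟫_ℂ := key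
    _ = ∑ j : {x // x ∈ s}, ∑ k : {x // x ∈ s}, ⟪L ↑k (stmt4kk K ↑j (ξ ↑j)), ξ ↑k⟫_ℂ := by
        exact Fintype.sum_equiv s.equivFin.symm _ _ fun j =>
          Fintype.sum_equiv s.equivFin.symm _ _ fun k => rfl
    _ = ∑ j ∈ s, ∑ k ∈ s, ⟪L k (stmt4kk K j (ξ j)), ξ k⟫_ℂ := by
        rw [← s.sum_coe_sort (fun j => ∑ k ∈ s, ⟪L k (stmt4kk K j (ξ j)), ξ k⟫_ℂ)]
        exact Finset.sum_congr rfl fun j _ => e1 j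

lemma stmt4herm (α β : Λ) (ξ η : Y) :
    ⟪L β (stmt4kk K α ξ), η⟫_ℂ = starRingEnd ℂ ⟪L α (stmt4kk K β η), ξ⟫_ℂ := by
  classical
  have im1 : ∀ (γ : Λ) (x : Y), (⟪L γ (stmt4kk K γ x), x⟫_ℂ).im = 0 := by
    intro γ x
    have := hp 1 ![γ] ![x]
    simp only [Fin.sum_univ_one] at this
    exact ((Complex.le_def.mp this).2).symm
  have key : ∀ (x y : Y),
      (⟪L β (stmt4kk K α x), y⟫_ℂ + ⟪L α (stmt4kk K β y), x⟫_ℂ).im = 0 := by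
    intro x y
    have h2 := hp 2 ![α, β] ![x, y]
    simp only [Fin.sum_univ_two, Matrix.cons_val_zero, Matrix.cons_val_one, Matrix.head_cons]
      at h2
    have him := ((Complex.le_def.mp h2).2).symm
    have ha := im1 α x
    have hb := im1 β y
    have : (⟪L α (stmt4kk K α x), x⟫_ℂ + ⟪L β (stmt4kk K α x), y⟫_ℂ +
        (⟪L α (stmt4kk K β y), x⟫_ℂ + ⟪L β (stmt4kk K β y), y⟫_ℂ)).im = 0 := him
    simp only [Complex.add_im] at this ⊢
    linarith
  have k1 := key ξ η
  have k2 := key (Complex.I • ξ) η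
  have e1 : ⟪L β (stmt4kk K α (Complex.I • ξ)), η⟫_ℂ
      = - Complex.I * ⟪L β (stmt4kk K α ξ), η⟫_ℂ := by
    rw [map_smul, map_smul, inner_smul_left]
    simp [Complex.conj_I]
  have e2 : ⟪L α (stmt4kk K β η), Complex.I • ξ⟫_ℂ
      = Complex.I * ⟪L α (stmt4kk K β η), ξ⟫_ℂ := by
    rw [inner_smul_right]
  rw [e1, e2] at k2
  set u := ⟪L β (stmt4kk K α ξ), η⟫_ℂ
  set v := ⟪L α (stmt4kk K β η), ξ⟫_ℂ
  simp only [Complex.add_im] at k1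
  have k2' : (-Complex.I * u + Complex.I * v).im = 0 := k2
  simp only [Complex.add_im, Complex.mul_im, Complex.neg_re, Complex.neg_im, Complex.I_re,
    Complex.I_im] at k2'
  apply Complex.ext <;> simp only [Complex.conj_re, Complex.conj_im] <;> linarith

end Positivity

/-- The pre-inner-product space core on the free space. -/
def stmt4core (hp : ∀ (n : ℕ) (α : Fin n → Λ) (ξ : Fin n → Y),
        0 ≤ ∑ j, ∑ k,
          ⟪ L (α k) ⟨K (α j) (ξ j), Submodule.subset_span ⟨α j, ξ j, rfl⟩⟩, ξ k⟫_ℂ) :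
    PreInnerProductSpace.Core ℂ (ULift.{w} (Λ →₀ Y)) where
  inner := stmt4inner K L
  conj_inner_symm := by
    intro x y
    show starRingEnd ℂ (stmt4inner K L y x) = stmt4inner K L x y
    rw [stmt4inner_expand, stmt4inner_expand, map_sum, Finset.sum_comm]
    refine Finset.sum_congr rfl fun α _ => ?_
    rw [map_sum]
    refine Finset.sum_congr rfl fun β _ => ?_
    exact (stmt4herm K L hp _ _ _ _).symm
  re_inner_nonneg := by
    intro x
    show 0 ≤ RCLike.re (stmt4inner K L x x)
    have h0 := stmt4pos_finset K L hp x.down.support x.down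
    rw [Finset.sum_comm] at h0
    rw [stmt4inner_expand]
    have := (Complex.le_def.mp h0).1
    simpa using this
  add_left := by
    intro x y z
    show stmt4inner K L (x + y) z = stmt4inner K L x z + stmt4inner K L y z
    rw [stmt4inner, stmt4inner, stmt4inner]
    have : (x + y).down = x.down + y.down := rfl
    rw [this, map_add, stmt4e_add]
  smul_left := by
    intro x y r
    show stmt4inner K L (r • x) y = starRingEnd ℂ r * stmt4inner K L x y
    rw [stmt4inner, stmt4inner]
    have : (r • x).down = r • x.down := rfl
    rw [this, map_smul, stmt4e_smul]

end Statement4Aux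


/-- Theorem 3.13. Let `K : Λ → (Y →ₗ Z)` and let `L α` be linear maps from
`S_K := span {K α ξ}` to `Y`. Then `K` is an operator reproducing kernel with respect to
`{L α}` (i.e. all the double sums `∑ j ∑ k ⟪L (α k) (K (α j) (ξ j)), ξ k⟫` are nonnegative
reals) if and only if there is a Hilbert space `W` and a feature map `Φ : Λ → B(Y, W)` with
`L β (K α ξ) = (Φ β)† (Φ α ξ)`. -/
theorem statement4 {Λ : Type u} {Y : Type v} {Z : Type w}
    [NormedAddCommGroup Y] [InnerProductSpace ℂ Y] [CompleteSpace Y]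
    [AddCommGroup Z] [Module ℂ Z]
    (K : Λ → Y →ₗ[ℂ] Z)
    (L : Λ → ↥(Submodule.span ℂ {z : Z | ∃ (α : Λ) (ξ : Y), z = K α ξ}) →ₗ[ℂ] Y) :
    (∀ (n : ℕ) (α : Fin n → Λ) (ξ : Fin n → Y),
        0 ≤ ∑ j, ∑ k,
          ⟪L (α k) ⟨K (α j) (ξ j), Submodule.subset_span ⟨α j, ξ j, rfl⟩⟩, ξ k⟫_ℂ)
    ↔ ∃ (W : Type (max u v w)) (_ : NormedAddCommGroup W) (_ : InnerProductSpace ℂ W)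
        (_ : CompleteSpace W) (Φ : Λ → Y →L[ℂ] W),
        ∀ (α β : Λ) (ξ : Y),
          L β ⟨K α ξ, Submodule.subset_span ⟨α, ξ, rfl⟩⟩
            = ContinuousLinearMap.adjoint (Φ β) (Φ α ξ) := by
  constructor
  · intro hp
    classical
    letI c : PreInnerProductSpace.Core ℂ (ULift.{w} (Λ →₀ Y)) := stmt4core K L hp
    letI : SeminormedAddCommGroup (ULift.{w} (Λ →₀ Y)) :=
      InnerProductSpace.Core.toSeminormedAddCommGroup (𝕜 := ℂ)
    letI : NormedSpace ℂ (ULift.{w} (Λ →₀ Y)) := InnerProductSpace.Core.toNormedSpace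
    letI iF : InnerProductSpace ℂ (ULift.{w} (Λ →₀ Y)) :=
      { inner := stmt4inner K L
        norm_sq_eq_re_inner := fun x => by
          rw [pow_two]
          exact (InnerProductSpace.Core.inner_self_eq_norm_mul_norm x).symm
        conj_inner_symm := c.conj_inner_symm
        add_left := c.add_left
        smul_left := c.smul_left }
    -- the symmetric operators `L α ∘ K α` are continuous (Hellinger–Toeplitz)
    have hsym : ∀ α : Λ, ((L α).comp (stmt4kk K α)).IsSymmetric := by
      intro α x y
      simp only [LinearMap.comp_apply]
      rw [stmt4herm K L hp α α x y, inner_conj_symm]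
    let M : Λ → Y →L[ℂ] Y := fun α =>
      ⟨(L α).comp (stmt4kk K α), (hsym α).continuous⟩
    -- the feature map into the free space
    let φ : Λ → Y →ₗ[ℂ] ULift.{w} (Λ →₀ Y) := fun α =>
      (ULift.moduleEquiv.symm.toLinearMap).comp (Finsupp.lsingle α)
    have hφinner : ∀ (α β : Λ) (ξ η : Y),
        ⟪φ α ξ, φ β η⟫_ℂ = ⟪L β (stmt4kk K α ξ), η⟫_ℂ :=
      fun α β ξ η => stmt4inner_single K L α β ξ η
    have hφbound : ∀ (α : Λ) (ξ : Y), ‖φ α ξ‖ ≤ Real.sqrt ‖M α‖ * ‖ξ‖ := by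
      intro α ξ
      have h1 : ‖φ α ξ‖ ^ 2 = (⟪φ α ξ, φ α ξ⟫_ℂ).re := norm_sq_eq_re_inner (𝕜 := ℂ) _
      have h2 : (⟪φ α ξ, φ α ξ⟫_ℂ).re = (⟪M α ξ, ξ⟫_ℂ).re := by
        rw [hφinner α α ξ ξ]; rfl
      have h3 : (⟪M α ξ, ξ⟫_ℂ).re ≤ ‖(⟪M α ξ, ξ⟫_ℂ)‖ := Complex.re_le_norm _
      have h4 : ‖(⟪M α ξ, ξ⟫_ℂ)‖ ≤ ‖M α ξ‖ * ‖ξ‖ := norm_inner_le_norm _ _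
      have h5 : ‖M α ξ‖ * ‖ξ‖ ≤ ‖M α‖ * ‖ξ‖ * ‖ξ‖ :=
        mul_le_mul_of_nonneg_right ((M α).le_opNorm ξ) (norm_nonneg _)
      have h6 : ‖φ α ξ‖ ^ 2 ≤ ‖M α‖ * ‖ξ‖ ^ 2 := by
        rw [h1, h2]; nlinarith [h3, h4, h5, sq_abs ‖ξ‖]
      have h7 : ‖φ α ξ‖ = Real.sqrt (‖φ α ξ‖ ^ 2) := (Real.sqrt_sq (norm_nonneg _)).symm
      rw [h7]
      calc Real.sqrt (‖φ α ξ‖ ^ 2) ≤ Real.sqrt (‖M α‖ * ‖ξ‖ ^ 2) := Real.sqrt_le_sqrt h6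
        _ = Real.sqrt ‖M α‖ * ‖ξ‖ := by
            rw [Real.sqrt_mul (norm_nonneg _), Real.sqrt_sq (norm_nonneg _)]
    let Φ : Λ → Y →L[ℂ] UniformSpace.Completion (ULift.{w} (Λ →₀ Y)) := fun α =>
      (UniformSpace.Completion.toComplL (𝕜 := ℂ)).comp
        ((φ α).mkContinuous (Real.sqrt ‖M α‖) (hφbound α))
    refine ⟨UniformSpace.Completion (ULift.{w} (Λ →₀ Y)), inferInstance, inferInstance,
      inferInstance, Φ, ?_⟩
    intro α β ξ
    apply ext_inner_right ℂ
    intro η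
    rw [ContinuousLinearMap.adjoint_inner_left]
    have hΦ : ∀ (γ : Λ) (y : Y), Φ γ y = ((φ γ y : ULift.{w} (Λ →₀ Y)) :
        UniformSpace.Completion (ULift.{w} (Λ →₀ Y))) := fun γ y => rfl
    rw [hΦ, hΦ, UniformSpace.Completion.inner_coe]
    exact (stmt4inner_single K L α β ξ η).symm
  · rintro ⟨W, _, _, _, Φ, hΦ⟩ n α ξ
    have : ∀ j k, (⟪L (α k) ⟨K (α j) (ξ j), Submodule.subset_span ⟨α j, ξ j, rfl⟩⟩, ξ k⟫_ℂ)
        = ⟪Φ (α j) (ξ j), Φ (α k) (ξ k)⟫_ℂ := by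
      intro j k
      rw [hΦ (α j) (α k) (ξ j), ContinuousLinearMap.adjoint_inner_left]
    calc (0:ℂ) ≤ ⟪∑ j, Φ (α j) (ξ j), ∑ k, Φ (α k) (ξ k)⟫_ℂ := by
          rw [Complex.le_def]
          have hre := inner_self_nonneg (𝕜 := ℂ) (x := ∑ j, Φ (α j) (ξ j))
          have him := inner_self_im (𝕜 := ℂ) (∑ j, Φ (α j) (ξ j))
          simp only [RCLike.re_to_complex, RCLike.im_to_complex] at hre him
          exact ⟨by simpa using hre, by simpa using him.symm⟩
      _ = ∑ j, ∑ k, ⟪Φ (α j) (ξ j), Φ (α k) (ξ k)⟫_ℂ := by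
          rw [sum_inner]
          exact Finset.sum_congr rfl fun j _ => inner_sum _ _ _
      _ = ∑ j, ∑ k,
          ⟪L (α k) ⟨K (α j) (ξ j), Submodule.subset_span ⟨α j, ξ j, rfl⟩⟩, ξ k⟫_ℂ := by
          exact Finset.sum_congr rfl fun j _ => Finset.sum_congr rfl fun k _ => (this j k).symm
end

section
/- Let X and Λ be sets, Y and W complex Hilbert spaces, Φ : X → B(Y, W) a map with span{Φ(x)ξ : x ∈ X, ξ ∈ Y} dense in W, and Ψ : Λ → B(Y, W) a map with span{Ψ(α)ξ : α ∈ Λ, ξ ∈ Y} dense in W. Then: (i) the linear map J : W → (X → Y) defined by (Ju)(x) := (Φ(x))†u is injective, so the range H := J(W), equipped with the inner product ⟨Ju, Jv⟩_H := ⟨u, v⟩_W, is a well-defined Hilbert space of Y-valued functions on X; (ii) for each x ∈ X the point evaluation f ↦ f(x) is a bounded linear operator from H to Y with norm at most ‖Φ(x)‖, and these evaluations jointly separate points of H; (iii) the operators L_α : H → Y defined by L_α(Ju) := (Ψ(α))†u are well defined, bounded with norm at most ‖Ψ(α)‖, and jointly separating (L_α(f) = 0 for all α implies f = 0); and (iv)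 the map K(α)ξ := J(Ψ(α)ξ) satisfies the reproducing property ⟨L_α(f), ξ⟩_Y = ⟨f, K(α)ξ⟩_H for all f ∈ H, α ∈ Λ, ξ ∈ Y. -/
open scoped InnerProductSpace

lemma sep_aux {ι Y W : Type*}
    [NormedAddCommGroup Y] [InnerProductSpace ℂ Y] [CompleteSpace Y]
    [NormedAddCommGroup W] [InnerProductSpace ℂ W] [CompleteSpace W]
    (T : ι → Y →L[ℂ] W)
    (h : Dense (↑(Submodule.span ℂ {w : W | ∃ (i : ι) (ξ : Y), w = T i ξ}) : Set W))
    (u : W) (hu : ∀ i : ι, ContinuousLinearMap.adjoint (T i) u = 0) : u = 0 := by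
  have hspan : ∀ w ∈ Submodule.span ℂ {w : W | ∃ (i : ι) (ξ : Y), w = T i ξ},
      ⟪w, u⟫_ℂ = 0 := by
    intro w hw
    induction hw using Submodule.span_induction with
    | mem w hw =>
      obtain ⟨i, ξ, rfl⟩ := hw
      have h2 := ContinuousLinearMap.adjoint_inner_left (T i) ξ u
      rw [hu i, inner_zero_left] at h2
      rw [← inner_conj_symm, ← h2, map_zero]
    | zero => simp
    | add a b _ _ ha hb => rw [inner_add_left, ha, hb, add_zero]
    | smul c a _ ha => rw [inner_smul_left, ha, mul_zero]
  have hcl : IsClosed {w : W | ⟪w, u⟫_ℂ = 0} :=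
    isClosed_eq (continuous_id.inner continuous_const) continuous_const
  have huniv : (Set.univ : Set W) ⊆ {w : W | ⟪w, u⟫_ℂ = 0} := by
    rw [← h.closure_eq]
    exact closure_minimal (fun w hw => hspan w hw) hcl
  have := huniv (Set.mem_univ u)
  exact inner_self_eq_zero.mp this

/-- sufficiency half of Theorem 4.4. Given feature maps
`Φ : X → B(Y, W)` and `Ψ : Λ → B(Y, W)` with dense spans, the map `J u := fun x => (Φ x)† u`
is injective (so `H := J(W)` with `⟪J u, J v⟫_H := ⟪u, v⟫_W` is a Hilbert space of `Y`-valued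
functions on `X`); point evaluations `f ↦ f x` are bounded by `‖Φ x‖` and jointly separating;
the operators `L α (J u) := (Ψ α)† u` are well defined, bounded by `‖Ψ α‖`, and jointly
separating; and the kernel `K α ξ = J (Ψ α ξ)` reproduces: `⟪L α f, ξ⟫_Y = ⟪f, K α ξ⟫_H`,
i.e. `⟪(Ψ α)† u, ξ⟫_Y = ⟪u, Ψ α ξ⟫_W`. -/
theorem statement6 {X Λ Y W : Type*}
    [NormedAddCommGroup Y] [InnerProductSpace ℂ Y] [CompleteSpace Y]
    [NormedAddCommGroup W] [InnerProductSpace ℂ W] [CompleteSpace W]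
    (Φ : X → Y →L[ℂ] W) (Ψ : Λ → Y →L[ℂ] W)
    (hΦ : Dense (↑(Submodule.span ℂ {w : W | ∃ (x : X) (ξ : Y), w = Φ x ξ}) : Set W))
    (hΨ : Dense (↑(Submodule.span ℂ {w : W | ∃ (α : Λ) (ξ : Y), w = Ψ α ξ}) : Set W)) :
    (Function.Injective fun (u : W) (x : X) => ContinuousLinearMap.adjoint (Φ x) u) ∧
    (∀ (x : X) (u : W), ‖ContinuousLinearMap.adjoint (Φ x) u‖ ≤ ‖Φ x‖ * ‖u‖) ∧
    (∀ u : W, (∀ x : X, ContinuousLinearMap.adjoint (Φ x) u = 0) → u = 0) ∧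
    (∀ (α : Λ) (u : W), ‖ContinuousLinearMap.adjoint (Ψ α) u‖ ≤ ‖Ψ α‖ * ‖u‖) ∧
    (∀ u : W, (∀ α : Λ, ContinuousLinearMap.adjoint (Ψ α) u = 0) → u = 0) ∧
    (∀ (u : W) (α : Λ) (ξ : Y),
      ⟪ContinuousLinearMap.adjoint (Ψ α) u, ξ⟫_ℂ = ⟪u, Ψ α ξ⟫_ℂ) := by
  have sepΦ : ∀ u : W, (∀ x : X, ContinuousLinearMap.adjoint (Φ x) u = 0) → u = 0 :=
    sep_aux Φ hΦ
  refine ⟨?_, ?_, sepΦ, ?_, sep_aux Ψ hΨ, ?_⟩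
  · intro u v huv
    have h : ∀ x, ContinuousLinearMap.adjoint (Φ x) (u - v) = 0 := by
      intro x
      have := congrFun huv x
      simp only at this
      rw [map_sub, this, sub_self]
    exact sub_eq_zero.mp (sepΦ _ h)
  · intro x u
    calc ‖ContinuousLinearMap.adjoint (Φ x) u‖ ≤ ‖ContinuousLinearMap.adjoint (Φ x)‖ * ‖u‖ :=
          (ContinuousLinearMap.adjoint (Φ x)).le_opNorm u
      _ = ‖Φ x‖ * ‖u‖ := by rw [ContinuousLinearMap.adjoint.norm_map]
  · intro α u
    calc ‖ContinuousLinearMap.adjoint (Ψ α) u‖ ≤ ‖ContinuousLinearMap.adjoint (Ψ α)‖ * ‖u‖ :=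
          (ContinuousLinearMap.adjoint (Ψ α)).le_opNorm u
      _ = ‖Ψ α‖ * ‖u‖ := by rw [ContinuousLinearMap.adjoint.norm_map]
  · intro u α ξ
    exact ContinuousLinearMap.adjoint_inner_left (Ψ α) ξ u
end

section
/- Let X be a metric space, Λ a set, and Y, W complex Hilbert spaces. Let Φ : X → B(Y, W) be continuous (in operator norm) with span{Φ(x)ξ : x ∈ X, ξ ∈ Y} dense in W, and let Ψ : Λ → B(Y, W) have span{Ψ(α)ξ : α ∈ Λ, ξ ∈ Y} dense in W. For each compact subset Z of X, the closure in C(Z, Y) (supremum norm) of the linear span of the functions {x ↦ (Φ(x))†Ψ(α)ξ : α ∈ Λ, ξ ∈ Y} equals the closure in C(Z, Y) of the set of functions {x ↦ (Φ(x))†u : u ∈ W}. In particular, the operator reproducing kernel K(α)ξ := (Φ(·))†Ψ(α)ξ is universal (its kernel sections have dense span in C(Z, Y) for every compact Z) if and only if {x ↦ (Φ(x))†u : u ∈ W} is dense in C(Z, Y) for every compact Z. -/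
open scoped InnerProductSpace

/-- Theorem 4.10. Let `Φ : X → B(Y, W)` be continuous with dense span and
`Ψ : Λ → B(Y, W)` have dense span. For every compact `Z ⊆ X`, the closure in `C(Z, Y)` of the
span of the kernel sections `x ↦ (Φ x)† (Ψ α ξ)` equals the closure of
`{x ↦ (Φ x)† u : u ∈ W}`; in particular the kernel `K α ξ := (Φ ·)† (Ψ α ξ)` is universal
iff `{(Φ ·)† u : u ∈ W}` is dense in `C(Z, Y)` for every compact `Z`. -/
theorem statement8 {X : Type*} [MetricSpace X] {Λ Y W : Type*}
    [NormedAddCommGroup Y] [InnerProductSpace ℂ Y] [CompleteSpace Y]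
    [NormedAddCommGroup W] [InnerProductSpace ℂ W] [CompleteSpace W]
    (Φ : X → Y →L[ℂ] W) (hcont : Continuous Φ)
    (hΦ : Dense (↑(Submodule.span ℂ {w : W | ∃ (x : X) (ξ : Y), w = Φ x ξ}) : Set W))
    (Ψ : Λ → Y →L[ℂ] W)
    (hΨ : Dense (↑(Submodule.span ℂ {w : W | ∃ (α : Λ) (ξ : Y), w = Ψ α ξ}) : Set W)) :
    (∀ Z : Set X, IsCompact Z →
      closure (↑(Submodule.span ℂ {h : C(Z, Y) | ∃ (α : Λ) (ξ : Y), ∀ z : Z,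
          h z = ContinuousLinearMap.adjoint (Φ ↑z) (Ψ α ξ)}) : Set C(Z, Y))
        = closure {h : C(Z, Y) | ∃ u : W, ∀ z : Z,
            h z = ContinuousLinearMap.adjoint (Φ ↑z) u}) ∧
    ((∀ Z : Set X, IsCompact Z →
        Dense (↑(Submodule.span ℂ {h : C(Z, Y) | ∃ (α : Λ) (ξ : Y), ∀ z : Z,
          h z = ContinuousLinearMap.adjoint (Φ ↑z) (Ψ α ξ)}) : Set C(Z, Y)))
      ↔ (∀ Z : Set X, IsCompact Z →
        Dense {h : C(Z, Y) | ∃ u : W, ∀ z : Z,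
          h z = ContinuousLinearMap.adjoint (Φ ↑z) u})) := by
  have main : ∀ Z : Set X, IsCompact Z →
      closure (↑(Submodule.span ℂ {h : C(Z, Y) | ∃ (α : Λ) (ξ : Y), ∀ z : Z,
          h z = ContinuousLinearMap.adjoint (Φ ↑z) (Ψ α ξ)}) : Set C(Z, Y))
        = closure {h : C(Z, Y) | ∃ u : W, ∀ z : Z,
            h z = ContinuousLinearMap.adjoint (Φ ↑z) u} := by
    intro Z hZ
    haveI : CompactSpace Z := isCompact_iff_compactSpace.mp hZ
    -- continuity of z ↦ adjoint (Φ z)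
    have hadj : Continuous fun z : Z => ContinuousLinearMap.adjoint (Φ ↑z) :=
      (ContinuousLinearMap.adjoint : (Y →L[ℂ] W) ≃ₗᵢ⋆[ℂ] (W →L[ℂ] Y)).continuous.comp
        (hcont.comp continuous_subtype_val)
    -- the linear map T : W →ₗ C(Z,Y)
    let f : W → C(Z, Y) := fun u =>
      ⟨fun z => ContinuousLinearMap.adjoint (Φ ↑z) u, hadj.clm_apply continuous_const⟩
    have hfz : ∀ u (z : Z), f u z = ContinuousLinearMap.adjoint (Φ ↑z) u := fun _ _ => rfl
    let T : W →ₗ[ℂ] C(Z, Y) :=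
      { toFun := f
        map_add' := fun u v => by ext z; simp [f]
        map_smul' := fun c u => by ext z; simp [f] }
    -- a bound on ‖Φ z‖ over Z
    obtain ⟨C, hC0, hC⟩ : ∃ C : ℝ, 0 ≤ C ∧ ∀ z : Z, ‖Φ ↑z‖ ≤ C := by
      rcases Z.eq_empty_or_nonempty with h | hne
      · exact ⟨0, le_refl 0, fun z => absurd z.2 (by simp [h])⟩
      · obtain ⟨z0, hz0, hmax⟩ := hZ.exists_isMaxOn hne
          ((continuous_norm.comp hcont).continuousOn)
        exact ⟨‖Φ z0‖, norm_nonneg _, fun z => hmax z.2⟩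
    have hbound : ∀ u : W, ‖T u‖ ≤ C * ‖u‖ := by
      intro u
      refine ContinuousMap.norm_le _ (by positivity) |>.mpr fun z => ?_
      calc ‖ContinuousLinearMap.adjoint (Φ ↑z) u‖
          ≤ ‖ContinuousLinearMap.adjoint (Φ ↑z)‖ * ‖u‖ :=
            ContinuousLinearMap.le_opNorm _ _
        _ ≤ C * ‖u‖ := by
            have : ‖ContinuousLinearMap.adjoint (Φ ↑z)‖ = ‖Φ ↑z‖ :=
              (ContinuousLinearMap.adjoint : (Y →L[ℂ] W) ≃ₗᵢ⋆[ℂ] (W →L[ℂ] Y)).norm_map _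
            rw [this]
            exact mul_le_mul_of_nonneg_right (hC z) (norm_nonneg u)
    have hTcont : Continuous T := AddMonoidHomClass.continuous_of_bound T C hbound
    set S1 : Set C(Z, Y) := {h : C(Z, Y) | ∃ (α : Λ) (ξ : Y), ∀ z : Z,
        h z = ContinuousLinearMap.adjoint (Φ ↑z) (Ψ α ξ)} with hS1
    set S2 : Set C(Z, Y) := {h : C(Z, Y) | ∃ u : W, ∀ z : Z,
        h z = ContinuousLinearMap.adjoint (Φ ↑z) u} with hS2
    have hS2range : S2 = Set.range T := by
      ext h
      constructor
      · rintro ⟨u, hu⟩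
        exact ⟨u, by ext z; exact (hu z).symm⟩
      · rintro ⟨u, rfl⟩
        exact ⟨u, fun z => rfl⟩
    apply le_antisymm
    · apply closure_mono
      have : Submodule.span ℂ S1 ≤ LinearMap.range T := by
        rw [Submodule.span_le]
        rintro h ⟨α, ξ, hαξ⟩
        exact ⟨Ψ α ξ, by ext z; exact (hαξ z).symm⟩
      intro h hh
      rw [hS2range]
      exact this hh
    · refine closure_minimal ?_ isClosed_closure
      rintro h ⟨u, hu⟩
      have hhu : h = T u := by ext z; exact hu z
      rw [hhu]
      have humem : u ∈ closure (↑(Submodule.span ℂ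
          {w : W | ∃ (α : Λ) (ξ : Y), w = Ψ α ξ}) : Set W) := by
        rw [hΨ.closure_eq]; trivial
      refine map_mem_closure hTcont humem ?_
      intro w hw
      have : T w ∈ Submodule.span ℂ S1 := by
        have hmap : Submodule.map T (Submodule.span ℂ
            {w : W | ∃ (α : Λ) (ξ : Y), w = Ψ α ξ}) ≤ Submodule.span ℂ S1 := by
          rw [Submodule.map_span, Submodule.span_le]
          rintro g ⟨w', ⟨α, ξ, rfl⟩, rfl⟩
          exact Submodule.subset_span ⟨α, ξ, fun z => rfl⟩
        exact hmap ⟨w, hw, rfl⟩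
      exact this
  refine ⟨main, ?_⟩
  constructor <;> intro h Z hZ <;>
    [rw [dense_iff_closure_eq, ← main Z hZ]; rw [dense_iff_closure_eq, main Z hZ]] <;>
    exact (dense_iff_closure_eq.mp (h Z hZ))
end

section
/- Let X be a compact topological space, μ a finite Borel measure on X, and 𝒦 : X × X → ℂ a continuous function. Let {u_α : α ∈ Λ} ⊆ L¹(X, μ) be a family whose linear span is dense in L¹(X, μ). Then the following are equivalent: (a) for every n ∈ ℕ and all α_1, …, α_n ∈ Λ, the n×n matrix with entries F_{jk} := ∫_X ∫_X u_{α_j}(s) 𝒦(s, t) conj(u_{α_k}(t)) dμ(s) dμ(t) is Hermitian and positive semi-definite; (b) for every g ∈ L¹(X, μ), the number ∫_X ∫_X g(s) 𝒦(s, t) conj(g(t)) dμ(s) dμ(t) is a nonnegative real. -/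
open MeasureTheory
open scoped ComplexOrder

namespace S12
set_option linter.unusedSectionVars false
set_option maxHeartbeats 1000000
set_option synthInstance.maxHeartbeats 400000

variable {X : Type*} [TopologicalSpace X] [CompactSpace X]
    [MeasurableSpace X] [BorelSpace X] {μ : Measure X} [IsFiniteMeasure μ]
    {𝒦 : X → X → ℂ}

noncomputable def H (μ : Measure X) (𝒦 : X → X → ℂ) (g : Lp ℂ 1 μ) (s : X) : ℂ :=
  ∫ t, 𝒦 s t * (starRingEnd ℂ) (g t) ∂μ

noncomputable def B (μ : Measure X) (𝒦 : X → X → ℂ) (f g : Lp ℂ 1 μ) : ℂ :=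
  ∫ s, f s * H μ 𝒦 g s ∂μ

lemma conj_int (g : Lp ℂ 1 μ) : Integrable (fun t => (starRingEnd ℂ) (g t)) μ :=
  (Complex.conjCLE : ℂ →L[ℝ] ℂ).integrable_comp (L1.integrable_coeFn g)

variable (h𝒦 : Continuous fun p : X × X => 𝒦 p.1 p.2) {C : ℝ}
  (hC : ∀ s t, ‖𝒦 s t‖ ≤ C)

section
include h𝒦

lemma cont_left (t : X) : Continuous fun s => 𝒦 s t :=
  h𝒦.comp (continuous_id.prodMk continuous_const)

lemma cont_right (s : X) : Continuous fun t => 𝒦 s t :=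
  h𝒦.comp (continuous_const.prodMk continuous_id)

omit h𝒦 in
lemma int_cm (g : Lp ℂ 1 μ) (φ : C(X, ℂ)) :
    Integrable (fun t => φ t * (starRingEnd ℂ) (g t)) μ := by
  obtain ⟨D, hD⟩ := (isCompact_range φ.continuous.norm).bddAbove
  exact (conj_int g).bdd_mul φ.continuous.aestronglyMeasurable
    (Filter.Eventually.of_forall fun t => hD ⟨t, rfl⟩)

lemma int_ker_right (g : Lp ℂ 1 μ) (s : X) :
    Integrable (fun t => 𝒦 s t * (starRingEnd ℂ) (g t)) μ :=
  int_cm g ⟨_, cont_right h𝒦 s⟩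

lemma cont_H (g : Lp ℂ 1 μ) : Continuous (H μ 𝒦 g) := by
  have hL : LipschitzWith ‖g‖₊ (fun φ : C(X, ℂ) => ∫ t, φ t * (starRingEnd ℂ) (g t) ∂μ) := by
    refine LipschitzWith.of_dist_le_mul fun φ ψ => ?_
    rw [dist_eq_norm, ← integral_sub (int_cm g φ) (int_cm g ψ)]
    refine (norm_integral_le_integral_norm _).trans ?_
    have : (‖g‖₊ : ℝ) * dist φ ψ = dist φ ψ * ‖g‖ := by
      simp [mul_comm]
    rw [this, L1.norm_eq_integral_norm, mul_comm (dist φ ψ), ← integral_mul_const]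
    refine integral_mono ((int_cm g φ).sub (int_cm g ψ)).norm
      (((L1.integrable_coeFn g).norm.mul_const _)) fun t => ?_
    have h1 : φ t * (starRingEnd ℂ) (g t) - ψ t * (starRingEnd ℂ) (g t)
        = (φ t - ψ t) * (starRingEnd ℂ) (g t) := by ring
    rw [h1]
    rw [norm_mul]
    rw [RCLike.norm_conj, mul_comm]
    refine mul_le_mul_of_nonneg_left ?_ (norm_nonneg _)
    rw [← dist_eq_norm]
    exact ContinuousMap.dist_apply_le_dist t
  have hcur : Continuous fun s => (ContinuousMap.mk _ h𝒦 : C(X × X, ℂ)).curry s :=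
    ((ContinuousMap.mk _ h𝒦 : C(X × X, ℂ)).curry).continuous
  exact hL.continuous.comp hcur

include hC

lemma norm_H_le (g : Lp ℂ 1 μ) (s : X) : ‖H μ 𝒦 g s‖ ≤ C * ‖g‖ := by
  refine (norm_integral_le_integral_norm _).trans ?_
  rw [L1.norm_eq_integral_norm, ← integral_const_mul]
  refine integral_mono (int_ker_right h𝒦 g s).norm
    ((L1.integrable_coeFn g).norm.const_mul C) fun t => ?_
  rw [norm_mul, RCLike.norm_conj]
  exact mul_le_mul_of_nonneg_right (hC s t) (norm_nonneg _)

lemma int_B (f g : Lp ℂ 1 μ) : Integrable (fun s => f s * H μ 𝒦 g s) μ := by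
  have := (L1.integrable_coeFn f).bdd_mul (cont_H h𝒦 g).aestronglyMeasurable
    (Filter.Eventually.of_forall fun s => norm_H_le h𝒦 hC g s)
  exact this.congr (Filter.Eventually.of_forall fun s => mul_comm _ _)

lemma norm_B_le (f g : Lp ℂ 1 μ) : ‖B μ 𝒦 f g‖ ≤ C * ‖g‖ * ‖f‖ := by
  refine (norm_integral_le_integral_norm _).trans ?_
  rw [L1.norm_eq_integral_norm (f := f), ← integral_const_mul]
  refine integral_mono (int_B h𝒦 hC f g).norm
    ((L1.integrable_coeFn f).norm.const_mul _) fun s => ?_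
  rw [norm_mul, mul_comm (C * ‖g‖)]
  exact mul_le_mul_of_nonneg_left (norm_H_le h𝒦 hC g s) (norm_nonneg _)

end

include h𝒦 in
lemma B_eq_iterated (f g : Lp ℂ 1 μ) :
    (∫ s, ∫ t, f s * 𝒦 s t * (starRingEnd ℂ) (g t) ∂μ ∂μ) = B μ 𝒦 f g := by
  simp only [B, H]
  refine integral_congr_ae (Filter.Eventually.of_forall fun s => ?_)
  dsimp only
  rw [← integral_const_mul]
  exact integral_congr_ae (Filter.Eventually.of_forall fun t => by ring)

section
include h𝒦 hC

lemma B_add_left (f f' g : Lp ℂ 1 μ) :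
    B μ 𝒦 (f + f') g = B μ 𝒦 f g + B μ 𝒦 f' g := by
  simp only [B]
  rw [← integral_add (int_B h𝒦 hC f g) (int_B h𝒦 hC f' g)]
  refine integral_congr_ae ?_
  filter_upwards [Lp.coeFn_add f f'] with s hs
  rw [hs]; simp [add_mul]

lemma B_smul_left (c : ℂ) (f g : Lp ℂ 1 μ) :
    B μ 𝒦 (c • f) g = c * B μ 𝒦 f g := by
  simp only [B]
  rw [← integral_const_mul]
  refine integral_congr_ae ?_
  filter_upwards [Lp.coeFn_smul c f] with s hs
  rw [hs]; simp; ring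

lemma H_add (g g' : Lp ℂ 1 μ) (s : X) :
    H μ 𝒦 (g + g') s = H μ 𝒦 g s + H μ 𝒦 g' s := by
  simp only [H]
  rw [← integral_add (int_ker_right h𝒦 g s) (int_ker_right h𝒦 g' s)]
  refine integral_congr_ae ?_
  filter_upwards [Lp.coeFn_add g g'] with t ht
  rw [ht]; simp [mul_add]

lemma H_smul (c : ℂ) (g : Lp ℂ 1 μ) (s : X) :
    H μ 𝒦 (c • g) s = (starRingEnd ℂ) c * H μ 𝒦 g s := by
  simp only [H]
  rw [← integral_const_mul]
  refine integral_congr_ae ?_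
  filter_upwards [Lp.coeFn_smul c g] with t ht
  rw [ht]; simp; ring

lemma B_add_right (f g g' : Lp ℂ 1 μ) :
    B μ 𝒦 f (g + g') = B μ 𝒦 f g + B μ 𝒦 f g' := by
  simp only [B]
  rw [← integral_add (int_B h𝒦 hC f g) (int_B h𝒦 hC f g')]
  refine integral_congr_ae (Filter.Eventually.of_forall fun s => ?_)
  dsimp only
  rw [H_add h𝒦 hC g g' s]; ring

lemma B_smul_right (c : ℂ) (f g : Lp ℂ 1 μ) :
    B μ 𝒦 f (c • g) = (starRingEnd ℂ) c * B μ 𝒦 f g := by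
  simp only [B]
  rw [← integral_const_mul]
  refine integral_congr_ae (Filter.Eventually.of_forall fun s => ?_)
  dsimp only
  rw [H_smul h𝒦 hC c g s]; ring

lemma H_zero (s : X) : H μ 𝒦 (0 : Lp ℂ 1 μ) s = 0 := by
  simp only [H]
  rw [show (0 : ℂ) = ∫ t, (0 : ℂ) ∂μ by simp]
  refine integral_congr_ae ?_
  filter_upwards [Lp.coeFn_zero ℂ 1 μ] with t ht
  rw [ht]; simp

lemma B_zero_left (g : Lp ℂ 1 μ) : B μ 𝒦 (0 : Lp ℂ 1 μ) g = 0 := by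
  simp only [B]
  rw [show (0 : ℂ) = ∫ s, (0 : ℂ) ∂μ by simp]
  refine integral_congr_ae ?_
  filter_upwards [Lp.coeFn_zero ℂ 1 μ] with s hs
  rw [hs]; simp

lemma B_zero_right (f : Lp ℂ 1 μ) : B μ 𝒦 f (0 : Lp ℂ 1 μ) = 0 := by
  simp only [B]
  rw [show (0 : ℂ) = ∫ s, (0 : ℂ) ∂μ by simp]
  refine integral_congr_ae (Filter.Eventually.of_forall fun s => ?_)
  dsimp only
  rw [H_zero h𝒦 hC s]; simp

lemma B_sum_left {ι : Type*} (s : Finset ι) (v : ι → Lp ℂ 1 μ) (g : Lp ℂ 1 μ) :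
    B μ 𝒦 (∑ j ∈ s, v j) g = ∑ j ∈ s, B μ 𝒦 (v j) g := by
  classical
  induction s using Finset.induction with
  | empty => simpa using B_zero_left h𝒦 hC g
  | insert _ _ hx ih =>
    rw [Finset.sum_insert hx, Finset.sum_insert hx, B_add_left h𝒦 hC, ih]

lemma B_sum_right {ι : Type*} (s : Finset ι) (f : Lp ℂ 1 μ) (v : ι → Lp ℂ 1 μ) :
    B μ 𝒦 f (∑ j ∈ s, v j) = ∑ j ∈ s, B μ 𝒦 f (v j) := by
  classical
  induction s using Finset.induction with
  | empty => simpa using B_zero_right h𝒦 hC f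
  | insert _ _ hx ih =>
    rw [Finset.sum_insert hx, Finset.sum_insert hx, B_add_right h𝒦 hC, ih]

end

section
include h𝒦 hC

lemma B_sub_right (f g g' : Lp ℂ 1 μ) :
    B μ 𝒦 f (g - g') = B μ 𝒦 f g - B μ 𝒦 f g' := by
  have := B_add_right h𝒦 hC f (g - g') g'
  rw [sub_add_cancel] at this
  rw [this]; ring

lemma B_sub_left (f f' g : Lp ℂ 1 μ) :
    B μ 𝒦 (f - f') g = B μ 𝒦 f g - B μ 𝒦 f' g := by
  have := B_add_left h𝒦 hC (f - f') f' g
  rw [sub_add_cancel] at this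
  rw [this]; ring

lemma cont_Q : Continuous fun g : Lp ℂ 1 μ => B μ 𝒦 g g := by
  rw [continuous_iff_continuousAt]
  intro g₀
  show Filter.Tendsto (fun f : Lp ℂ 1 μ => B μ 𝒦 f f) (nhds g₀) (nhds (B μ 𝒦 g₀ g₀))
  refine tendsto_iff_norm_sub_tendsto_zero.mpr ?_
  have hb : ∀ f : Lp ℂ 1 μ, ‖B μ 𝒦 f f - B μ 𝒦 g₀ g₀‖
      ≤ C * ‖f - g₀‖ * ‖f‖ + C * ‖g₀‖ * ‖f - g₀‖ := by
    intro f
    have h1 : B μ 𝒦 f f - B μ 𝒦 g₀ g₀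
        = B μ 𝒦 f (f - g₀) + B μ 𝒦 (f - g₀) g₀ := by
      rw [B_sub_right h𝒦 hC, B_sub_left h𝒦 hC]; ring
    rw [h1]
    exact (norm_add_le _ _).trans
      (add_le_add (norm_B_le h𝒦 hC f (f - g₀)) (norm_B_le h𝒦 hC (f - g₀) g₀))
  have hcont : Continuous fun f : Lp ℂ 1 μ =>
      C * ‖f - g₀‖ * ‖f‖ + C * ‖g₀‖ * ‖f - g₀‖ :=
    ((continuous_const.mul (continuous_id.sub continuous_const).norm).mul
      continuous_norm).add (continuous_const.mul (continuous_id.sub continuous_const).norm)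
  have hval : Filter.Tendsto
      (fun f : Lp ℂ 1 μ => C * ‖f - g₀‖ * ‖f‖ + C * ‖g₀‖ * ‖f - g₀‖) (nhds g₀)
      (nhds 0) := by
    have := hcont.tendsto g₀
    simpa using this
  exact squeeze_zero (fun f => norm_nonneg _) hb hval

lemma im_Q_eq_zero (hp : ∀ g : Lp ℂ 1 μ, 0 ≤ B μ 𝒦 g g) (g : Lp ℂ 1 μ) :
    (B μ 𝒦 g g).im = 0 := ((Complex.le_def.mp (hp g)).2).symm

lemma B_conj_symm (hp : ∀ g : Lp ℂ 1 μ, 0 ≤ B μ 𝒦 g g) (f g : Lp ℂ 1 μ) :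
    B μ 𝒦 f g = (starRingEnd ℂ) (B μ 𝒦 g f) := by
  have h1 : B μ 𝒦 (f + g) (f + g)
      = B μ 𝒦 f f + B μ 𝒦 g g + (B μ 𝒦 f g + B μ 𝒦 g f) := by
    rw [B_add_left h𝒦 hC, B_add_right h𝒦 hC, B_add_right h𝒦 hC]; ring
  have h2 : B μ 𝒦 (f + Complex.I • g) (f + Complex.I • g)
      = B μ 𝒦 f f + B μ 𝒦 g g + (Complex.I * B μ 𝒦 g f - Complex.I * B μ 𝒦 f g) := by
    rw [B_add_left h𝒦 hC, B_add_right h𝒦 hC, B_add_right h𝒦 hC, B_smul_left h𝒦 hC,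
      B_smul_right h𝒦 hC, B_smul_right h𝒦 hC, B_smul_left h𝒦 hC]
    simp only [Complex.conj_I, smul_eq_mul]
    ring_nf
    simp only [Complex.I_sq]
    ring
  have i1 : (B μ 𝒦 f g + B μ 𝒦 g f).im = 0 := by
    have := im_Q_eq_zero h𝒦 hC hp (f + g)
    rw [h1] at this
    simpa [im_Q_eq_zero h𝒦 hC hp f, im_Q_eq_zero h𝒦 hC hp g] using this
  have i2 : (B μ 𝒦 g f).re - (B μ 𝒦 f g).re = 0 := by
    have := im_Q_eq_zero h𝒦 hC hp (f + Complex.I • g)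
    rw [h2] at this
    simpa [im_Q_eq_zero h𝒦 hC hp f, im_Q_eq_zero h𝒦 hC hp g, Complex.add_im,
      Complex.sub_im, Complex.mul_im, Complex.I_re, Complex.I_im] using this
  apply Complex.ext
  · rw [Complex.conj_re]; linarith
  · rw [Complex.conj_im]
    have : (B μ 𝒦 f g).im + (B μ 𝒦 g f).im = 0 := by
      simpa [Complex.add_im] using i1
    linarith

lemma quad {Λ : Type*} (u : Λ → Lp ℂ 1 μ) {n : ℕ} (α : Fin n → Λ) (x : Fin n → ℂ) :
    dotProduct (star x)
        (Matrix.mulVec (Matrix.of fun j k : Fin n => B μ 𝒦 (u (α j)) (u (α k))) x)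
      = B μ 𝒦 (∑ j, (starRingEnd ℂ) (x j) • u (α j))
          (∑ j, (starRingEnd ℂ) (x j) • u (α j)) := by
  rw [B_sum_left h𝒦 hC]
  simp only [B_smul_left h𝒦 hC, B_sum_right h𝒦 hC, B_smul_right h𝒦 hC, Complex.conj_conj]
  simp only [dotProduct, Matrix.mulVec, Matrix.of_apply, Pi.star_apply,
    RCLike.star_def, Finset.mul_sum]
  exact Finset.sum_congr rfl fun j _ => Finset.sum_congr rfl fun k _ => by ring

end

end S12

set_option maxHeartbeats 1000000 in
set_option synthInstance.maxHeartbeats 400000 in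
/-- Proposition 5.7. Let `X` be compact, `μ` a finite Borel measure,
`𝒦 : X × X → ℂ` continuous, and `{u_α} ⊆ L¹(X, μ)` with dense span. Then all the matrices
`[∫∫ u_{α_j}(s) 𝒦(s,t) conj(u_{α_k}(t)) dμ dμ]` are Hermitian positive semi-definite if and
only if `∫∫ g(s) 𝒦(s,t) conj(g(t)) dμ dμ ≥ 0` for every `g ∈ L¹(X, μ)`. -/
theorem statement12 {X : Type*} [TopologicalSpace X] [CompactSpace X]
    [MeasurableSpace X] [BorelSpace X] (μ : Measure X) [IsFiniteMeasure μ]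
    (𝒦 : X → X → ℂ) (h𝒦 : Continuous fun p : X × X => 𝒦 p.1 p.2)
    {Λ : Type*} (u : Λ → Lp ℂ 1 μ)
    (hdense : Dense (↑(Submodule.span ℂ (Set.range u)) : Set (Lp ℂ 1 μ))) :
    (∀ (n : ℕ) (α : Fin n → Λ),
      (Matrix.of fun j k : Fin n =>
        ∫ s, ∫ t, u (α j) s * 𝒦 s t * (starRingEnd ℂ) (u (α k) t) ∂μ ∂μ).PosSemidef)
    ↔ ∀ g : Lp ℂ 1 μ,
        0 ≤ ∫ s, ∫ t, g s * 𝒦 s t * (starRingEnd ℂ) (g t) ∂μ ∂μ := by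
    classical
  obtain ⟨C, hC'⟩ := (isCompact_range h𝒦.norm).bddAbove
  have hC : ∀ s t, ‖𝒦 s t‖ ≤ C := fun s t => hC' ⟨(s, t), rfl⟩
  have hmat : ∀ (n : ℕ) (α : Fin n → Λ),
      (Matrix.of fun j k : Fin n =>
          ∫ s, ∫ t, u (α j) s * 𝒦 s t * (starRingEnd ℂ) (u (α k) t) ∂μ ∂μ)
        = Matrix.of fun j k : Fin n => S12.B μ 𝒦 (u (α j)) (u (α k)) := by
    intro n α; ext j k; exact S12.B_eq_iterated h𝒦 _ _
  constructor
  · intro hPSD g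
    rw [S12.B_eq_iterated h𝒦]
    have hclosed : IsClosed {g : Lp ℂ 1 μ | 0 ≤ S12.B μ 𝒦 g g} := by
      have h1 : {g : Lp ℂ 1 μ | 0 ≤ S12.B μ 𝒦 g g}
          = (fun g => S12.B μ 𝒦 g g) ⁻¹' {z : ℂ | 0 ≤ z} := rfl
      rw [h1]
      refine IsClosed.preimage (S12.cont_Q h𝒦 hC) ?_
      have h2 : {z : ℂ | 0 ≤ z} = Complex.re ⁻¹' Set.Ici 0 ∩ Complex.im ⁻¹' {0} := by
        ext z
        simp only [Set.mem_setOf_eq, Complex.le_def, Set.mem_inter_iff, Set.mem_preimage,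
          Set.mem_Ici, Set.mem_singleton_iff, Complex.zero_re, Complex.zero_im]
        tauto
      rw [h2]
      exact (isClosed_Ici.preimage Complex.continuous_re).inter
        (isClosed_singleton.preimage Complex.continuous_im)
    have hsub : (↑(Submodule.span ℂ (Set.range u)) : Set (Lp ℂ 1 μ))
        ⊆ {g : Lp ℂ 1 μ | 0 ≤ S12.B μ 𝒦 g g} := by
      intro g hg
      rw [SetLike.mem_coe, Finsupp.mem_span_range_iff_exists_finsupp] at hg
      obtain ⟨c, rfl⟩ := hg
      have e := c.support.equivFin
      have hq := (Matrix.posSemidef_iff_dotProduct_mulVec.mp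
          (hPSD c.support.card fun i => ((e.symm i : c.support) : Λ))).2
        (fun j => (starRingEnd ℂ) (c ((e.symm j : c.support) : Λ)))
      rw [hmat, S12.quad h𝒦 hC u] at hq
      simp only [Complex.conj_conj] at hq
      have hsum : (c.sum fun i a => a • u i)
          = ∑ j, c ((e.symm j : c.support) : Λ) • u ((e.symm j : c.support) : Λ) := by
        rw [Finsupp.sum, ← Finset.sum_coe_sort c.support (fun i => c i • u i),
          ← Equiv.sum_comp e.symm (fun a : c.support => c ↑a • u ↑a)]
      rw [Set.mem_setOf_eq, hsum]
      exact hq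
    exact (hclosed.closure_subset_iff.mpr hsub) (hdense g)
  · intro hpos n α
    have hp : ∀ g : Lp ℂ 1 μ, 0 ≤ S12.B μ 𝒦 g g := by
      intro g; have := hpos g; rwa [S12.B_eq_iterated h𝒦] at this
    rw [hmat n α]
    refine Matrix.posSemidef_iff_dotProduct_mulVec.mpr ⟨?_, ?_⟩
    · refine Matrix.ext fun j k => ?_
      simp only [Matrix.conjTranspose_apply, Matrix.of_apply, RCLike.star_def]
      exact (S12.B_conj_symm h𝒦 hC hp _ _).symm
    · intro x
      rw [S12.quad h𝒦 hC u α x]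
      exact hp _
end

section
/- Let n ≥ 1 and write each j ∈ ℤ uniquely as j = nm + l with m ∈ ℤ and l ∈ {0, …, n−1}. Let (x_j)_{j∈ℤ} be real numbers such that for each l ∈ {0, …, n−1} the family of functions (t ↦ (2π)^{−1/2} e^{i x_{nm+l} t})_{m∈ℤ} is a frame for L²([−π, π]). Let η_0, …, η_{n−1} ∈ ℂⁿ be the columns of a unitary n×n matrix, and set ξ_{nm+l} := η_l for all m ∈ ℤ, l ∈ {0, …, n−1}. Define Φ(x, ξ) ∈ L²([−π, π], ℂⁿ) by Φ(x, ξ)(t) := (2π)^{−1/2} e^{i x t} ξ. Then (Φ(x_j, ξ_j))_{j∈ℤ} is a frame for L²([−π, π], ℂⁿ). Moreover, if for each l the family ((2π)^{−1/2} e^{i x_{nm+l} (·)})_{m∈ℤ} is additionally ℓ²-independent (for every square-summable (c_m), summability of ∑_m c_m e^{i x_{nm+l}(·)} to 0 in L²([−π,π]) implies c = 0), then (Φ(x_j, ξ_j))_{j∈ℤ} is also ℓ²-independent, i.e., it is a Riesz basis for L²([−π, π], ℂⁿ). -/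
open MeasureTheory
open scoped InnerProductSpace

/-- Lebesgue measure restricted to `[-π, π]`. -/
noncomputable def muPi : Measure ℝ := volume.restrict (Set.Icc (-Real.pi) Real.pi)

/-- A family `v : J → H` in a complex inner product space is a frame with bounds
`0 < A ≤ B` if for every `f` the sum `∑ j, ‖⟪f, v j⟫‖²` converges to some `S` with
`A ‖f‖ ≤ √S ≤ B ‖f‖`. -/
def IsFrameWith {H : Type*} [NormedAddCommGroup H] [InnerProductSpace ℂ H]
    {J : Type*} (v : J → H) (A B : ℝ) : Prop :=
  ∀ f : H, ∃ S : ℝ, HasSum (fun j => ‖⟪f, v j⟫_ℂ‖ ^ 2) S ∧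
    A * ‖f‖ ≤ Real.sqrt S ∧ Real.sqrt S ≤ B * ‖f‖

/-- A family `v : J → H` is `ℓ²`-independent if for every square-summable scalar family
`c : J → ℂ` with `∑ j, c j • v j = 0` (as a convergent sum) one has `c = 0`. -/
def IsL2Indep {H : Type*} [NormedAddCommGroup H] [InnerProductSpace ℂ H]
    {J : Type*} (v : J → H) : Prop :=
  ∀ c : J → ℂ, Summable (fun j => ‖c j‖ ^ 2) →
    HasSum (fun j => c j • v j) 0 → ∀ j, c j = 0

/-- The bijection `(l, m) ↦ n m + l` between `Fin n × ℤ` and `ℤ`. -/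
def zE (n : ℕ) (hn : 0 < n) : Fin n × ℤ ≃ ℤ where
  toFun p := (n : ℤ) * p.2 + ((p.1 : ℕ) : ℤ)
  invFun j := (⟨(j % (n : ℤ)).toNat, by
      have h0 : 0 ≤ j % (n : ℤ) := Int.emod_nonneg j (by exact_mod_cast hn.ne')
      have h1 : j % (n : ℤ) < (n : ℤ) := Int.emod_lt_of_pos j (by exact_mod_cast hn)
      omega⟩, j / (n : ℤ))
  left_inv := by
    rintro ⟨l, m⟩
    have hne : (n : ℤ) ≠ 0 := by exact_mod_cast hn.ne'
    have hl0 : (0 : ℤ) ≤ ((l : ℕ) : ℤ) := Int.natCast_nonneg _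
    have hl : ((l : ℕ) : ℤ) < (n : ℤ) := by exact_mod_cast l.isLt
    have hmod : ((n : ℤ) * m + ((l : ℕ) : ℤ)) % (n : ℤ) = ((l : ℕ) : ℤ) := by
      rw [add_comm, Int.add_mul_emod_self_left, Int.emod_eq_of_lt hl0 hl]
    have hdiv : ((n : ℤ) * m + ((l : ℕ) : ℤ)) / (n : ℤ) = m := by
      rw [add_comm, Int.add_mul_ediv_left _ _ hne, Int.ediv_eq_zero_of_lt hl0 hl, zero_add]
    simp only [hmod, hdiv, Prod.mk.injEq]
    exact ⟨by ext; simp, by trivial⟩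
  right_inv := by
    intro j
    have h0 : 0 ≤ j % (n : ℤ) := Int.emod_nonneg j (by exact_mod_cast hn.ne')
    simp only [Int.toNat_of_nonneg h0]
    exact Int.mul_ediv_add_emod j n

/-- The squared `L²` norm is the integral of the pointwise squared norm. -/
lemma l2_norm_sq {α E : Type*} {m : MeasurableSpace α} {μ : Measure α}
    [NormedAddCommGroup E] [InnerProductSpace ℂ E] (f : Lp E 2 μ) :
    ‖f‖ ^ 2 = ∫ a, ‖(f : α → E) a‖ ^ 2 ∂μ := by
  have h1 : (RCLike.re (K := ℂ) (⟪f, f⟫_ℂ)) = ‖f‖ ^ 2 := inner_self_eq_norm_sq f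
  rw [← h1, L2.inner_def, ← integral_re (L2.integrable_inner (𝕜 := ℂ) f f)]
  exact integral_congr_ae (Filter.Eventually.of_forall fun a =>
    inner_self_eq_norm_sq (𝕜 := ℂ) _)

lemma l2_integrable_norm_sq {α E : Type*} {m : MeasurableSpace α} {μ : Measure α}
    [NormedAddCommGroup E] [InnerProductSpace ℂ E] (f : Lp E 2 μ) :
    Integrable (fun a => ‖(f : α → E) a‖ ^ 2) μ := by
  have h := (L2.integrable_inner (𝕜 := ℂ) f f).re
  exact h.congr (Filter.Eventually.of_forall fun a => inner_self_eq_norm_sq (𝕜 := ℂ) _)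

set_option maxHeartbeats 1000000 in
/-- Theorem 6.7. Write each `j ∈ ℤ` as `j = n m + l` with `l ∈ Fin n`.
If for every `l` the normalized exponentials `E m l` with frequencies `x (n m + l)` form a
frame for `L²([-π, π])`, `η` is an orthonormal family (the columns of a unitary matrix) in
`ℂⁿ`, `ξ (n m + l) := η l`, and `V j ∈ L²([-π, π], ℂⁿ)` is the vector-valued exponential
`t ↦ (2π)^{-1/2} e^{i x_j t} ξ j`, then `(V j)_{j ∈ ℤ}` is a frame for `L²([-π, π], ℂⁿ)`;
moreover if each family `(E m l)_m` is `ℓ²`-independent (a Riesz basis), then so is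
`(V j)_{j ∈ ℤ}` (a Riesz basis). -/
theorem statement15 (n : ℕ) (hn : 0 < n) (x : ℤ → ℝ)
    (E : ℤ → Fin n → Lp ℂ 2 muPi)
    (hE : ∀ (m : ℤ) (l : Fin n), (E m l : ℝ → ℂ) =ᵐ[muPi] fun t =>
      ((Real.sqrt (2 * Real.pi))⁻¹ : ℂ) *
        Complex.exp (Complex.I * (x ((n : ℤ) * m + ((l : ℕ) : ℤ)) : ℂ) * (t : ℂ)))
    (η : Fin n → EuclideanSpace ℂ (Fin n)) (hη : Orthonormal ℂ η)
    (ξ : ℤ → EuclideanSpace ℂ (Fin n))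
    (hξ : ∀ (m : ℤ) (l : Fin n), ξ ((n : ℤ) * m + ((l : ℕ) : ℤ)) = η l)
    (V : ℤ → Lp (EuclideanSpace ℂ (Fin n)) 2 muPi)
    (hV : ∀ j : ℤ, (V j : ℝ → EuclideanSpace ℂ (Fin n)) =ᵐ[muPi] fun t =>
      (((Real.sqrt (2 * Real.pi))⁻¹ : ℂ) *
        Complex.exp (Complex.I * (x j : ℂ) * (t : ℂ))) • ξ j)
    (hframe : ∀ l : Fin n, ∃ A B : ℝ, 0 < A ∧ A ≤ B ∧
      IsFrameWith (fun m : ℤ => E m l) A B) :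
    (∃ A B : ℝ, 0 < A ∧ A ≤ B ∧ IsFrameWith V A B) ∧
    ((∀ l : Fin n, IsL2Indep (fun m : ℤ => E m l)) → IsL2Indep V) := by
  classical
  haveI : NeZero n := ⟨hn.ne'⟩
  set e : Fin n × ℤ ≃ ℤ := zE n hn with he
  -- the embedding and projection operators
  set ι : Fin n → (Lp ℂ 2 muPi →L[ℂ] Lp (EuclideanSpace ℂ (Fin n)) 2 muPi) :=
    fun l => ContinuousLinearMap.compLpL 2 muPi
      (ContinuousLinearMap.toSpanSingleton ℂ (η l)) with hι
  set P : Fin n → (Lp (EuclideanSpace ℂ (Fin n)) 2 muPi →L[ℂ] Lp ℂ 2 muPi) :=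
    fun l => ContinuousLinearMap.compLpL 2 muPi (innerSL ℂ (η l)) with hP
  -- coercion descriptions of ι and P
  have hιcoe : ∀ (l : Fin n) (g : Lp ℂ 2 muPi),
      (ι l g : ℝ → EuclideanSpace ℂ (Fin n)) =ᵐ[muPi]
        fun a => ((g : ℝ → ℂ) a) • η l := by
    intro l g
    have h := ContinuousLinearMap.coeFn_compLpL (p := 2) (μ := muPi)
      (ContinuousLinearMap.toSpanSingleton ℂ (η l)) g
    rw [hι]
    filter_upwards [h] with a ha
    rw [ha, ContinuousLinearMap.toSpanSingleton_apply]
  have hPcoe : ∀ (l : Fin n) (f : Lp (EuclideanSpace ℂ (Fin n)) 2 muPi),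
      (P l f : ℝ → ℂ) =ᵐ[muPi] fun a => ⟪η l, (f : ℝ → EuclideanSpace ℂ (Fin n)) a⟫_ℂ := by
    intro l f
    have h := ContinuousLinearMap.coeFn_compLpL (p := 2) (μ := muPi) (innerSL ℂ (η l)) f
    rw [hP]
    filter_upwards [h] with a ha
    rw [ha, innerSL_apply_apply]
  -- (a) V (n m + l) = ι l (E m l)
  have hVι : ∀ (m : ℤ) (l : Fin n), V ((n : ℤ) * m + ((l : ℕ) : ℤ)) = ι l (E m l) := by
    intro m l
    apply Lp.ext
    filter_upwards [hV ((n : ℤ) * m + ((l : ℕ) : ℤ)), hE m l, hιcoe l (E m l)]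
      with t h1 h2 h3
    rw [h1, h3, h2, hξ m l]
  -- (b) adjoint relation
  have hadj : ∀ (f : Lp (EuclideanSpace ℂ (Fin n)) 2 muPi) (l : Fin n) (g : Lp ℂ 2 muPi),
      ⟪f, ι l g⟫_ℂ = ⟪P l f, g⟫_ℂ := by
    intro f l g
    rw [L2.inner_def (𝕜 := ℂ), L2.inner_def (𝕜 := ℂ)]
    apply integral_congr_ae
    filter_upwards [hιcoe l g, hPcoe l f] with t h1 h2
    rw [h1, h2, inner_smul_right, RCLike.inner_apply, ← inner_conj_symm]
  -- (c) P l' ∘ ι l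
  have hPι : ∀ (l l' : Fin n) (g : Lp ℂ 2 muPi),
      P l' (ι l g) = if l' = l then g else 0 := by
    intro l l' g
    have hI : ⟪η l', η l⟫_ℂ = if l' = l then 1 else 0 := orthonormal_iff_ite.mp hη l' l
    by_cases h : l' = l
    · subst h
      rw [if_pos rfl]
      apply Lp.ext
      filter_upwards [hPcoe l' (ι l' g), hιcoe l' g] with t h1 h2
      rw [h1, h2, inner_smul_right, hI, if_pos rfl, mul_one]
    · rw [if_neg h]
      apply Lp.ext
      filter_upwards [hPcoe l' (ι l g), hιcoe l g, Lp.coeFn_zero ℂ 2 muPi] with t h1 h2 h0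
      rw [h1, h2, inner_smul_right, hI, if_neg h, mul_zero, h0, Pi.zero_apply]
  -- orthonormal basis built from η
  have hcard : Fintype.card (Fin n) = Module.finrank ℂ (EuclideanSpace ℂ (Fin n)) := by simp
  let bb : Module.Basis (Fin n) ℂ (EuclideanSpace ℂ (Fin n)) :=
    basisOfLinearIndependentOfCardEqFinrank hη.linearIndependent hcard
  have hbb : ⇑bb = η := coe_basisOfLinearIndependentOfCardEqFinrank _ _
  let b : OrthonormalBasis (Fin n) ℂ (EuclideanSpace ℂ (Fin n)) :=
    bb.toOrthonormalBasis (by rwa [hbb])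
  have hb : ⇑b = η := by rw [Module.Basis.coe_toOrthonormalBasis, hbb]
  have hpt : ∀ v : EuclideanSpace ℂ (Fin n), ∑ l, ‖⟪η l, v⟫_ℂ‖ ^ 2 = ‖v‖ ^ 2 := by
    intro v
    have h1 : ‖b.repr v‖ = ‖v‖ := b.repr.norm_map v
    rw [← h1, EuclideanSpace.norm_eq, Real.sq_sqrt (by positivity)]
    refine Finset.sum_congr rfl fun l _ => ?_
    rw [← hb, ← OrthonormalBasis.repr_apply_apply]
  -- (d) Parseval for the projections
  have hsum_norm : ∀ f : Lp (EuclideanSpace ℂ (Fin n)) 2 muPi,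
      ∑ l, ‖P l f‖ ^ 2 = ‖f‖ ^ 2 := by
    intro f
    have hint : ∀ l : Fin n, Integrable (fun a => ‖(P l f : ℝ → ℂ) a‖ ^ 2) muPi :=
      fun l => l2_integrable_norm_sq (P l f)
    calc ∑ l, ‖P l f‖ ^ 2
        = ∑ l, ∫ a, ‖(P l f : ℝ → ℂ) a‖ ^ 2 ∂muPi :=
          Finset.sum_congr rfl fun l _ => l2_norm_sq _
      _ = ∫ a, ∑ l, ‖(P l f : ℝ → ℂ) a‖ ^ 2 ∂muPi :=
          (integral_finset_sum _ (fun l _ => hint l)).symm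
      _ = ∫ a, ‖(f : ℝ → EuclideanSpace ℂ (Fin n)) a‖ ^ 2 ∂muPi := by
          apply integral_congr_ae
          have hall : ∀ᵐ a ∂muPi, ∀ l : Fin n,
              (P l f : ℝ → ℂ) a = ⟪η l, (f : ℝ → EuclideanSpace ℂ (Fin n)) a⟫_ℂ :=
            ae_all_iff.mpr fun l => hPcoe l f
          filter_upwards [hall] with a ha
          simp only [ha]
          exact hpt _
      _ = ‖f‖ ^ 2 := (l2_norm_sq f).symm
  -- key inner product identity
  have hkey : ∀ (f : Lp (EuclideanSpace ℂ (Fin n)) 2 muPi) (l : Fin n) (m : ℤ),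
      ⟪f, V (e (l, m))⟫_ℂ = ⟪P l f, E m l⟫_ℂ := by
    intro f l m
    have : e (l, m) = (n : ℤ) * m + ((l : ℕ) : ℤ) := rfl
    rw [this, hVι m l, hadj]
  have hV' : ∀ (l : Fin n) (m : ℤ), V (e (l, m)) = ι l (E m l) := fun l m => hVι m l
  constructor
  · -- frame part
    choose A B hA hAB hfr using hframe
    set A0 : ℝ := Finset.univ.inf' Finset.univ_nonempty A with hA0
    set B0 : ℝ := Finset.univ.sup' Finset.univ_nonempty B with hB0
    have hA0pos : 0 < A0 := by
      rw [hA0, Finset.lt_inf'_iff]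
      exact fun l _ => hA l
    have hA0le : ∀ l, A0 ≤ A l := fun l => Finset.inf'_le A (Finset.mem_univ l)
    have hB0le : ∀ l, B l ≤ B0 := fun l => Finset.le_sup' B (Finset.mem_univ l)
    have hBnn : ∀ l, 0 ≤ B l := fun l => ((hA l).le.trans (hAB l))
    have hA0B0 : A0 ≤ B0 :=
      calc A0 ≤ A ⟨0, hn⟩ := hA0le _
        _ ≤ B ⟨0, hn⟩ := hAB _
        _ ≤ B0 := hB0le _
    refine ⟨A0, B0, hA0pos, hA0B0, ?_⟩
    · intro f
      choose S hS hlow hup using fun l => hfr l (P l f)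
      have hS0 : ∀ l, 0 ≤ S l := fun l => (hS l).nonneg (fun m => by positivity)
      have hfib : ∀ l, HasSum (fun m => ‖⟪f, V (e (l, m))⟫_ℂ‖ ^ 2) (S l) := by
        intro l
        simpa only [hkey] using hS l
      refine ⟨∑ l, S l, ?_, ?_, ?_⟩
      · rw [← e.hasSum_iff]
        have hnn : 0 ≤ (fun p : Fin n × ℤ => ((fun j => ‖⟪f, V j⟫_ℂ‖ ^ 2) ∘ e) p) :=
          fun p => sq_nonneg _
        have hsummable : Summable ((fun j => ‖⟪f, V j⟫_ℂ‖ ^ 2) ∘ e) := by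
          rw [summable_prod_of_nonneg hnn]
          exact ⟨fun l => (hfib l).summable, Summable.of_finite⟩
        obtain ⟨T, hT⟩ := hsummable
        have h2 : HasSum S T := hT.prod_fiberwise hfib
        have h3 : T = ∑ l, S l := h2.unique (hasSum_fintype S)
        exact h3 ▸ hT
      · have hsq : A0 ^ 2 * ‖f‖ ^ 2 ≤ ∑ l, S l := by
          rw [← hsum_norm f, Finset.mul_sum]
          refine Finset.sum_le_sum fun l _ => ?_
          have h1 : A0 * ‖P l f‖ ≤ Real.sqrt (S l) :=
            le_trans (mul_le_mul_of_nonneg_right (hA0le l) (norm_nonneg _)) (hlow l)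
          have h2 : (A0 * ‖P l f‖) ^ 2 ≤ Real.sqrt (S l) ^ 2 :=
            pow_le_pow_left₀ (by positivity) h1 2
          rw [Real.sq_sqrt (hS0 l)] at h2
          calc A0 ^ 2 * ‖P l f‖ ^ 2 = (A0 * ‖P l f‖) ^ 2 := by ring
            _ ≤ S l := h2
        have := Real.sqrt_le_sqrt hsq
        rwa [show A0 ^ 2 * ‖f‖ ^ 2 = (A0 * ‖f‖) ^ 2 by ring,
          Real.sqrt_sq (by positivity)] at this
      · have hsq : ∑ l, S l ≤ B0 ^ 2 * ‖f‖ ^ 2 := by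
          rw [← hsum_norm f, Finset.mul_sum]
          refine Finset.sum_le_sum fun l _ => ?_
          have h1 : Real.sqrt (S l) ≤ B0 * ‖P l f‖ :=
            le_trans (hup l) (mul_le_mul_of_nonneg_right (hB0le l) (norm_nonneg _))
          have h2 : Real.sqrt (S l) ^ 2 ≤ (B0 * ‖P l f‖) ^ 2 :=
            pow_le_pow_left₀ (Real.sqrt_nonneg _) h1 2
          rw [Real.sq_sqrt (hS0 l)] at h2
          calc S l ≤ (B0 * ‖P l f‖) ^ 2 := h2
            _ = B0 ^ 2 * ‖P l f‖ ^ 2 := by ring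
        have := Real.sqrt_le_sqrt hsq
        rwa [show B0 ^ 2 * ‖f‖ ^ 2 = (B0 * ‖f‖) ^ 2 by ring,
          Real.sqrt_sq (mul_nonneg (hA0pos.le.trans hA0B0) (norm_nonneg _))] at this
  · -- Riesz-basis (ℓ²-independence) part
    intro hind c hc hsum0
    have h1 : HasSum (fun p : Fin n × ℤ => c (e p) • V (e p)) 0 :=
      (e.hasSum_iff (f := fun j => c j • V j)).mpr hsum0
    have hfibsummable : ∀ l : Fin n, Summable (fun m : ℤ => c (e (l, m)) • V (e (l, m))) := by
      intro l
      have hinj : Function.Injective (fun m : ℤ => ((l, m) : Fin n × ℤ)) := by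
        intro a b hab
        simpa using hab
      exact h1.summable.comp_injective hinj
    choose g hg using hfibsummable
    have htot : HasSum g 0 := h1.prod_fiberwise hg
    have hgsum : ∑ l, g l = 0 := (hasSum_fintype g).unique htot
    have hPg0 : ∀ l' l : Fin n, l' ≠ l → P l' (g l) = 0 := by
      intro l' l hne
      have h3 := (P l').hasSum (hg l)
      have hterm : ∀ m : ℤ, P l' (c (e (l, m)) • V (e (l, m))) = (0 : Lp ℂ 2 muPi) := by
        intro m
        rw [hV' l m, _root_.map_smul, hPι l l', if_neg hne, smul_zero]
      simp only [hterm] at h3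
      exact h3.unique hasSum_zero
    have hPgl : ∀ l : Fin n, HasSum (fun m : ℤ => c (e (l, m)) • E m l) (P l (g l)) := by
      intro l
      have h3 := (P l).hasSum (hg l)
      have hterm : ∀ m : ℤ, P l (c (e (l, m)) • V (e (l, m))) = c (e (l, m)) • E m l := by
        intro m
        rw [hV' l m, _root_.map_smul, hPι l l, if_pos rfl]
      simpa only [hterm] using h3
    have hPgl0 : ∀ l : Fin n, P l (g l) = 0 := by
      intro l
      have h4 : ∑ l', P l (g l') = 0 := by rw [← map_sum, hgsum, map_zero]
      have h5 : ∑ l', P l (g l') = P l (g l) :=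
        Finset.sum_eq_single l (fun l' _ hne => hPg0 l l' hne.symm) (by simp)
      rw [h5] at h4
      exact h4
    have hzero : ∀ (l : Fin n) (m : ℤ), c (e (l, m)) = 0 := by
      intro l m
      have hinj : Function.Injective (fun m : ℤ => e (l, m)) := by
        intro a b hab
        have := e.injective hab
        simpa using this
      have hcsq : Summable (fun m : ℤ => ‖c (e (l, m))‖ ^ 2) := hc.comp_injective hinj
      have h6 := hPgl l
      rw [hPgl0 l] at h6
      exact hind l _ hcsq h6 m
    intro j
    have := hzero (e.symm j).1 (e.symm j).2
    simpa only [Prod.mk.eta, Equiv.apply_symm_apply] using this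
end

section
/- Let H and Y be complex Hilbert spaces, J a countable index set, and L_j : H → Y, j ∈ J, bounded linear operators. Assume there exists c > 0 such that for every square-summable family (ξ_j)_{j∈J} ∈ ℓ²(J, Y) with ∑_{j∈J} ‖ξ_j‖² = 1, the family ((L_j)†(ξ_j))_{j∈J} is summable in H with ‖∑_{j∈J} (L_j)†(ξ_j)‖_H ≤ c. Then: (i) the sampling operator I : H → ℓ²(J, Y), f ↦ (L_j(f))_{j∈J}, is well defined and bounded with ‖I(f)‖_{ℓ²(J,Y)} ≤ c‖f‖_H for all f ∈ H; (ii) for every λ > 0 the operator λ·id_H + I† ∘ I is coercive (⟨(λ + I†I)f, f⟩ ≥ λ‖f‖² for all f), hence bijective with bounded inverse; and (iii) there exists c′ > 0 such that ‖(λ·id_H + I†I)⁻¹(I†(ξ))‖_H ≤ c′‖ξ‖_{ℓ²(J,Y)} for all ξ ∈ ℓ²(J, Y); consequently ‖(λ + I†I)⁻¹ I† (I f)‖_H ≤ c c′ ‖f‖_H for all f ∈ H. -/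
open scoped InnerProductSpace ComplexOrder ENNReal

private lemma stmt19_key {H Y : Type*}
    [NormedAddCommGroup H] [InnerProductSpace ℂ H] [CompleteSpace H]
    [NormedAddCommGroup Y] [InnerProductSpace ℂ Y] [CompleteSpace Y]
    {J : Type*} (L : J → H →L[ℂ] Y) (c : ℝ) (hc : 0 < c)
    (hyp : ∀ ξ : J → Y, Summable (fun j => ‖ξ j‖ ^ 2) → (∑' j, ‖ξ j‖ ^ 2) = 1 →
      Summable (fun j => ContinuousLinearMap.adjoint (L j) (ξ j)) ∧
      ‖∑' j, ContinuousLinearMap.adjoint (L j) (ξ j)‖ ≤ c)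
    (f : H) (F : Finset J) : ∑ j ∈ F, ‖L j f‖ ^ 2 ≤ (c * ‖f‖) ^ 2 := by
  classical
  set s2 : ℝ := ∑ j ∈ F, ‖L j f‖ ^ 2 with hs2
  have hs2nn : 0 ≤ s2 := Finset.sum_nonneg fun j _ => sq_nonneg _
  rcases eq_or_lt_of_le hs2nn with h0 | hpos
  · rw [← h0]; positivity
  · set s : ℝ := Real.sqrt s2 with hs
    have hspos : 0 < s := Real.sqrt_pos.2 hpos
    have hss : s ^ 2 = s2 := Real.sq_sqrt hs2nn
    set ξ : J → Y := fun j => if j ∈ F then ((s⁻¹ : ℝ) : ℂ) • L j f else 0 with hξ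
    have hξ0 : ∀ j ∉ F, ξ j = 0 := fun j hj => by simp [hξ, hj]
    have hnξ : ∀ j ∈ F, ‖ξ j‖ ^ 2 = s⁻¹ ^ 2 * ‖L j f‖ ^ 2 := by
      intro j hj
      simp only [hξ, if_pos hj, norm_smul, Complex.norm_real, Real.norm_eq_abs,
        abs_of_nonneg (inv_nonneg.2 hspos.le)]
      ring
    have hsummable : Summable (fun j => ‖ξ j‖ ^ 2) :=
      summable_of_ne_finset_zero (s := F) (fun j hj => by simp [hξ0 j hj])
    have htsum : (∑' j, ‖ξ j‖ ^ 2) = 1 := by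
      rw [tsum_eq_sum (s := F) (fun j hj => by simp [hξ0 j hj])]
      rw [Finset.sum_congr rfl hnξ, ← Finset.mul_sum, ← hs2, inv_pow, hss,
        inv_mul_cancel₀ (ne_of_gt hpos)]
    obtain ⟨hsumA, hleA⟩ := hyp ξ hsummable htsum
    set A : H := ∑' j, ContinuousLinearMap.adjoint (L j) (ξ j) with hA
    have hA' : A = ∑ j ∈ F, ContinuousLinearMap.adjoint (L j) (ξ j) :=
      tsum_eq_sum (fun j hj => by simp [hξ0 j hj])
    have hinner : ⟪f, A⟫_ℂ = ((s : ℝ) : ℂ) := by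
      rw [hA', inner_sum]
      have : ∀ j ∈ F, ⟪f, ContinuousLinearMap.adjoint (L j) (ξ j)⟫_ℂ
          = ((s⁻¹ : ℝ) : ℂ) * ((‖L j f‖ : ℂ) ^ 2) := by
        intro j hj
        rw [ContinuousLinearMap.adjoint_inner_right]
        simp only [hξ, if_pos hj, inner_smul_right, inner_self_eq_norm_sq_to_K]
        rfl
      rw [Finset.sum_congr rfl this, ← Finset.mul_sum]
      have : (∑ j ∈ F, ((‖L j f‖ : ℂ)) ^ 2) = ((s2 : ℝ) : ℂ) := by
        rw [hs2]; push_cast; rfl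
      rw [this]
      rw [← hss]
      push_cast
      field_simp
    have hsle : s ≤ c * ‖f‖ := by
      have h1 : s = ‖⟪f, A⟫_ℂ‖ := by rw [hinner]; simp [abs_of_nonneg hspos.le]
      calc s = ‖⟪f, A⟫_ℂ‖ := h1
        _ ≤ ‖f‖ * ‖A‖ := norm_inner_le_norm _ _
        _ ≤ ‖f‖ * c := by
            exact mul_le_mul_of_nonneg_left hleA (norm_nonneg f)
        _ = c * ‖f‖ := mul_comm _ _
    calc s2 = s ^ 2 := hss.symm
      _ ≤ (c * ‖f‖) ^ 2 := by
          apply pow_le_pow_left₀ hspos.le hsle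

set_option maxHeartbeats 1000000 in
/-- Theorem 8.3, stability of Tikhonov reconstruction. Let
`L j : H → Y`, `j ∈ J` (J countable), be bounded operators such that for every unit-norm
square-summable family `(ξ j)` the family `((L j)† (ξ j))` is summable with
`‖∑ j, (L j)† (ξ j)‖ ≤ c`. Then (i) the sampling operator `I f := (L j f)_j` is a well
defined bounded operator `H → ℓ²(J, Y)` with `‖I f‖ ≤ c ‖f‖`; (ii) for every `λ > 0` the
operator `λ • id + I† ∘ I` is coercive, hence bijective with bounded inverse `S`; and
(iii) there is `c' > 0` with `‖S (I† ξ)‖ ≤ c' ‖ξ‖` for all `ξ`, whence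
`‖S (I† (I f))‖ ≤ c c' ‖f‖` for all `f`. -/
theorem statement19 {H Y : Type*}
    [NormedAddCommGroup H] [InnerProductSpace ℂ H] [CompleteSpace H]
    [NormedAddCommGroup Y] [InnerProductSpace ℂ Y] [CompleteSpace Y]
    {J : Type*} [Countable J] (L : J → H →L[ℂ] Y) (c : ℝ) (hc : 0 < c)
    (hyp : ∀ ξ : J → Y, Summable (fun j => ‖ξ j‖ ^ 2) → (∑' j, ‖ξ j‖ ^ 2) = 1 →
      Summable (fun j => ContinuousLinearMap.adjoint (L j) (ξ j)) ∧
      ‖∑' j, ContinuousLinearMap.adjoint (L j) (ξ j)‖ ≤ c) :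
    ∃ I : H →L[ℂ] lp (fun _ : J => Y) 2,
      (∀ (f : H) (j : J), I f j = L j f) ∧
      (∀ f : H, ‖I f‖ ≤ c * ‖f‖) ∧
      ∀ lam : ℝ, 0 < lam →
        (∀ f : H, ((lam * ‖f‖ ^ 2 : ℝ) : ℂ) ≤
          ⟪((lam : ℂ) • ContinuousLinearMap.id ℂ H
              + (ContinuousLinearMap.adjoint I).comp I) f, f⟫_ℂ) ∧
        ∃ S : H →L[ℂ] H,
          S.comp ((lam : ℂ) • ContinuousLinearMap.id ℂ H
              + (ContinuousLinearMap.adjoint I).comp I) = ContinuousLinearMap.id ℂ H ∧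
          ((lam : ℂ) • ContinuousLinearMap.id ℂ H
              + (ContinuousLinearMap.adjoint I).comp I).comp S = ContinuousLinearMap.id ℂ H ∧
          ∃ c' : ℝ, 0 < c' ∧
            (∀ ξ : lp (fun _ : J => Y) 2,
              ‖S (ContinuousLinearMap.adjoint I ξ)‖ ≤ c' * ‖ξ‖) ∧
            (∀ f : H, ‖S (ContinuousLinearMap.adjoint I (I f))‖ ≤ c * c' * ‖f‖) := by
  classical
  have key := stmt19_key L c hc hyp
  have hrp : (2 : ℝ≥0∞).toReal = 2 := by norm_num
  have hconv : ∀ x : ℝ, x ^ (2 : ℝ≥0∞).toReal = x ^ 2 := by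
    intro x
    rw [hrp]
    exact_mod_cast Real.rpow_natCast x 2
  have mem : ∀ f : H, Memℓp (fun j => L j f) 2 := by
    intro f
    apply memℓp_gen' (C := (c * ‖f‖) ^ 2)
    intro F
    calc ∑ i ∈ F, ‖L i f‖ ^ (2 : ℝ≥0∞).toReal = ∑ i ∈ F, ‖L i f‖ ^ 2 :=
          Finset.sum_congr rfl fun i _ => hconv _
      _ ≤ (c * ‖f‖) ^ 2 := key f F
  let I0 : H →ₗ[ℂ] lp (fun _ : J => Y) 2 :=
    { toFun := fun f => ⟨fun j => L j f, mem f⟩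
      map_add' := fun f g => lp.ext (by
        rw [lp.coeFn_add]; funext j; simp)
      map_smul' := fun a f => lp.ext (by
        rw [lp.coeFn_smul]; funext j; simp) }
  have hb : ∀ f, ‖I0 f‖ ≤ c * ‖f‖ := by
    intro f
    apply lp.norm_le_of_forall_sum_le (by rw [hrp]; norm_num) (by positivity)
    intro F
    calc ∑ i ∈ F, ‖I0 f i‖ ^ (2 : ℝ≥0∞).toReal = ∑ i ∈ F, ‖L i f‖ ^ 2 :=
          Finset.sum_congr rfl fun i _ => hconv _
      _ ≤ (c * ‖f‖) ^ 2 := key f F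
      _ = (c * ‖f‖) ^ (2 : ℝ≥0∞).toReal := (hconv _).symm
  let I : H →L[ℂ] lp (fun _ : J => Y) 2 := I0.mkContinuous c hb
  have hIapp : ∀ (f : H) (j : J), I f j = L j f := fun f j => rfl
  have hIb : ∀ f : H, ‖I f‖ ≤ c * ‖f‖ := hb
  have hInorm : ‖I‖ ≤ c := I0.mkContinuous_norm_le hc.le hb
  have hadjnorm : ‖ContinuousLinearMap.adjoint I‖ ≤ c := by
    rw [LinearIsometryEquiv.norm_map ContinuousLinearMap.adjoint I] at *
    exact hInorm
  have hadjb : ∀ ξ : lp (fun _ : J => Y) 2, ‖ContinuousLinearMap.adjoint I ξ‖ ≤ c * ‖ξ‖ := by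
    intro ξ
    calc ‖ContinuousLinearMap.adjoint I ξ‖ ≤ ‖ContinuousLinearMap.adjoint I‖ * ‖ξ‖ :=
          ContinuousLinearMap.le_opNorm _ _
      _ ≤ c * ‖ξ‖ := mul_le_mul_of_nonneg_right hadjnorm (norm_nonneg _)
  refine ⟨I, hIapp, hIb, ?_⟩
  intro lam hlam
  set T : H →L[ℂ] H := (lam : ℂ) • ContinuousLinearMap.id ℂ H
      + (ContinuousLinearMap.adjoint I).comp I with hT
  have hTapp : ∀ f, T f = (lam : ℂ) • f + ContinuousLinearMap.adjoint I (I f) := fun f => rfl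
  have hinnerT : ∀ f : H, ⟪T f, f⟫_ℂ = ((lam * ‖f‖ ^ 2 + ‖I f‖ ^ 2 : ℝ) : ℂ) := by
    intro f
    rw [hTapp, inner_add_left, inner_smul_left, inner_self_eq_norm_sq_to_K,
      ContinuousLinearMap.adjoint_inner_left, inner_self_eq_norm_sq_to_K]
    push_cast
    rw [Complex.conj_ofReal]
    first
    | rfl
    | ring
    | (ring_nf; rfl)
  have coer : ∀ f : H, ((lam * ‖f‖ ^ 2 : ℝ) : ℂ) ≤ ⟪T f, f⟫_ℂ := by
    intro f
    rw [hinnerT, Complex.real_le_real]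
    nlinarith [sq_nonneg ‖I f‖]
  have hlow : ∀ f : H, lam * ‖f‖ ≤ ‖T f‖ := by
    intro f
    rcases eq_or_lt_of_le (norm_nonneg f) with h0 | h0
    · rw [← h0]; simpa using norm_nonneg (T f)
    · have h1 : lam * ‖f‖ ^ 2 ≤ ‖⟪T f, f⟫_ℂ‖ := by
        rw [hinnerT, Complex.norm_real, Real.norm_eq_abs,
          abs_of_nonneg (by positivity)]
        nlinarith [sq_nonneg ‖I f‖]
      have h2 : ‖⟪T f, f⟫_ℂ‖ ≤ ‖T f‖ * ‖f‖ := norm_inner_le_norm _ _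
      nlinarith
  have hinj : Function.Injective T := by
    intro a b hab
    have h1 := hlow (a - b)
    rw [map_sub, hab, sub_self, norm_zero] at h1
    have h2 : ‖a - b‖ ≤ 0 := by nlinarith [norm_nonneg (a - b)]
    have : a - b = 0 := norm_le_zero_iff.1 h2
    exact sub_eq_zero.1 this
  have hker : T.ker = ⊥ := (LinearMap.ker_eq_bot (f := (T : H →ₗ[ℂ] H))).2 hinj
  have hanti : AntilipschitzWith (lam⁻¹).toNNReal T := by
    apply ContinuousLinearMap.antilipschitz_of_bound
    intro f
    rw [Real.coe_toNNReal _ (inv_nonneg.2 hlam.le), inv_mul_eq_div]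
    exact (le_div_iff₀' hlam).2 (hlow f)
  have hclosed : IsClosed (Set.range T) := hanti.isClosed_range T.uniformContinuous
  have hcls : IsClosed ((T.range : Submodule ℂ H) : Set H) := by
    have : ((T.range : Submodule ℂ H) : Set H) = Set.range T := by
      ext x; simp [LinearMap.mem_range]
    rw [this]; exact hclosed
  haveI : CompleteSpace (T.range) := hcls.completeSpace_coe
  have horto : (T.range)ᗮ = ⊥ := by
    rw [Submodule.eq_bot_iff]
    intro g hg
    have h0 : ⟪T g, g⟫_ℂ = 0 :=
      hg (T g) (LinearMap.mem_range_self _ g)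
    have h1 := coer g
    rw [h0] at h1
    have h2 : lam * ‖g‖ ^ 2 ≤ 0 := by
      have h1' : ((lam * ‖g‖ ^ 2 : ℝ) : ℂ) ≤ ((0 : ℝ) : ℂ) := by
        simpa using h1
      exact Complex.real_le_real.1 h1'
    have h3 : ‖g‖ ^ 2 ≤ 0 := by nlinarith
    have h4 : ‖g‖ ^ 2 = 0 := le_antisymm h3 (sq_nonneg _)
    exact norm_eq_zero.1 (pow_eq_zero_iff (two_ne_zero) |>.1 h4)
  have hrange : T.range = ⊤ := Submodule.orthogonal_eq_bot_iff.1 horto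
  let e : H ≃L[ℂ] H := ContinuousLinearEquiv.ofBijective T hker hrange
  have heval : ∀ x, e x = T x := fun x => rfl
  have hTS : ∀ y, T (e.symm y) = y := fun y => by
    rw [← heval, e.apply_symm_apply]
  have hSnorm : ∀ y : H, ‖(e.symm : H →L[ℂ] H) y‖ ≤ lam⁻¹ * ‖y‖ := by
    intro y
    have h1 := hlow (e.symm y)
    rw [hTS y] at h1
    have h2 : ‖(e.symm : H →L[ℂ] H) y‖ = ‖e.symm y‖ := rfl
    rw [h2, inv_mul_eq_div]
    exact (le_div_iff₀' hlam).2 h1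
  refine ⟨coer, (e.symm : H →L[ℂ] H), ?_, ?_, c / lam, div_pos hc hlam, ?_, ?_⟩
  · refine ContinuousLinearMap.ext fun x => ?_
    have hx : (e.symm : H →L[ℂ] H) (T x) = x := by
      have : e.symm (e x) = x := e.symm_apply_apply x
      rw [heval] at this
      exact this
    exact hx
  · refine ContinuousLinearMap.ext fun x => ?_
    exact hTS x
  · intro ξ
    calc ‖(e.symm : H →L[ℂ] H) (ContinuousLinearMap.adjoint I ξ)‖
        ≤ lam⁻¹ * ‖ContinuousLinearMap.adjoint I ξ‖ := hSnorm _
      _ ≤ lam⁻¹ * (c * ‖ξ‖) :=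
          mul_le_mul_of_nonneg_left (hadjb ξ) (inv_nonneg.2 hlam.le)
      _ = c / lam * ‖ξ‖ := by ring
  · intro f
    calc ‖(e.symm : H →L[ℂ] H) (ContinuousLinearMap.adjoint I (I f))‖
        ≤ lam⁻¹ * ‖ContinuousLinearMap.adjoint I (I f)‖ := hSnorm _
      _ ≤ lam⁻¹ * (c * ‖I f‖) :=
          mul_le_mul_of_nonneg_left (hadjb _) (inv_nonneg.2 hlam.le)
      _ ≤ lam⁻¹ * (c * (c * ‖f‖)) := by
          have := hIb f
          have hc2 : 0 ≤ c := hc.le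
          have : c * ‖I f‖ ≤ c * (c * ‖f‖) := mul_le_mul_of_nonneg_left (hIb f) hc2
          exact mul_le_mul_of_nonneg_left this (inv_nonneg.2 hlam.le)
      _ = c * (c / lam) * ‖f‖ := by ring
end
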